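/- arXiv:2312.02861 — 5 statements merged into one kernel-verified Lean document; each statement's English description precedes it below -/
import Mathlib

section
/- A based quantum torus framing is determined by its values on the standard basis (eq. (20) of the paper, after Berenstein–Zelevinsky Lemma 4.4): under the stated hypotheses, every value B λ is a unit of R with two-sided inverse B (-λ), and for every λ : Fin N → ℤ one has B λ = v^{-∑_{i<j} λ i · λ j · ω i j} * ∏_{i=0}^{N-1} (B (e i))^{λ i}, where the factors are integer powers of the units B (e i) taken in increasing order of the index i. -/
private def qtDelta (N : ℕ) : Fin N → Fin N → ℤ := fun i j => if j = i then 1 else 0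


/-- A framing of a based quantum torus is determined by its values on
the standard basis (eq. (20) of the paper, after Berenstein–Zelevinsky Lemma 4.4):
if `B : (Fin N → ℤ) → R` satisfies `B 0 = 1` and
`B λ * B μ = v ^ ⟨λ,μ⟩ * B (λ + μ)` for a central unit `v` and a skew-symmetric `ω`,
then every `B λ` is a unit with two-sided inverse `B (-λ)`, and
`B λ = v ^ (-∑_{i<j} λ i * λ j * ω i j) * ∏_{i} (B (e i)) ^ (λ i)`, the factors being
integer powers of the units `B (e i)` taken in increasing order of the index `i`. -/
theorem stmt_1 {R : Type*} [Ring R] (v : Rˣ)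
    (hv : ∀ r : R, (v : R) * r = r * (v : R))
    (N : ℕ) (ω : Fin N → Fin N → ℤ)
    (hω : ∀ i j, ω i j = -ω j i)
    (B : (Fin N → ℤ) → R)
    (hB0 : B 0 = 1)
    (hBmul : ∀ l m : Fin N → ℤ,
      B l * B m =
        ((v ^ (∑ i : Fin N, ∑ j : Fin N, l i * m j * ω i j) : Rˣ) : R) * B (l + m)) :
    (∀ l : Fin N → ℤ, B l * B (-l) = 1 ∧ B (-l) * B l = 1) ∧
      ∃ u : Fin N → Rˣ,
        (∀ i : Fin N, (u i : R) = B (fun j => if j = i then 1 else 0)) ∧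
        ∀ l : Fin N → ℤ,
          B l =
            ((v ^ (-(∑ i : Fin N, ∑ j : Fin N, if i < j then l i * l j * ω i j else 0)) :
                Rˣ) : R) *
              ((((List.finRange N).map (fun i => u i ^ (l i))).prod : Rˣ) : R) := by
  have hωii : ∀ i, ω i i = 0 := fun i => by have := hω i i; omega
  have hSll : ∀ l : Fin N → ℤ, (∑ i : Fin N, ∑ j : Fin N, l i * l j * ω i j) = 0 := by
    intro l
    have h1 : (∑ i : Fin N, ∑ j : Fin N, l i * l j * ω i j)
        = ∑ j : Fin N, ∑ i : Fin N, l i * l j * ω i j := Finset.sum_comm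
    have h2 : (∑ j : Fin N, ∑ i : Fin N, l i * l j * ω i j)
        = -∑ i : Fin N, ∑ j : Fin N, l i * l j * ω i j := by
      rw [← Finset.sum_neg_distrib]
      refine Finset.sum_congr rfl fun j _ => ?_
      rw [← Finset.sum_neg_distrib]
      refine Finset.sum_congr rfl fun i _ => ?_
      rw [hω i j]; ring
    omega
  have hinv : ∀ l : Fin N → ℤ, B l * B (-l) = 1 ∧ B (-l) * B l = 1 := by
    intro l
    have e1 : (∑ i : Fin N, ∑ j : Fin N, l i * (-l) j * ω i j) = 0 := by
      have h := hSll l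
      have : ∀ a b : Fin N, l a * (-l) b * ω a b = -(l a * l b * ω a b) := fun a b => by
        simp only [Pi.neg_apply]; ring
      simp only [this, Finset.sum_neg_distrib, h, neg_zero]
    have e2 : (∑ i : Fin N, ∑ j : Fin N, (-l) i * l j * ω i j) = 0 := by
      have h := hSll l
      have : ∀ a b : Fin N, (-l) a * l b * ω a b = -(l a * l b * ω a b) := fun a b => by
        simp only [Pi.neg_apply]; ring
      simp only [this, Finset.sum_neg_distrib, h, neg_zero]
    have h1 := hBmul l (-l)
    have h2 := hBmul (-l) l
    rw [e1] at h1
    rw [e2] at h2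
    simp only [zpow_zero, Units.val_one, one_mul, add_neg_cancel, neg_add_cancel, hB0] at h1 h2
    exact ⟨h1, h2⟩
  refine ⟨hinv, ?_⟩
  classical
  obtain ⟨U, hUval, hUinv⟩ :
      ∃ U : Fin N → Rˣ, (∀ i, (U i : R) = B (qtDelta N i)) ∧
        ∀ i, (((U i)⁻¹ : Rˣ) : R) = B (-qtDelta N i) :=
    ⟨fun i => ⟨B (qtDelta N i), B (-qtDelta N i), (hinv _).1, (hinv _).2⟩,
      fun _ => rfl, fun _ => rfl⟩
  have hzd : ∀ (i : Fin N) (c d : ℤ),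
      (∑ a : Fin N, ∑ b : Fin N, (c • qtDelta N i) a * (d • qtDelta N i) b * ω a b) = 0 := by
    intro i c d
    have h1 : ∀ a b : Fin N, (c • qtDelta N i) a * (d • qtDelta N i) b * ω a b
        = if a = i then (if b = i then c * d * ω a b else 0) else 0 := by
      intro a b
      by_cases ha : a = i <;> by_cases hb : b = i <;>
        simp [qtDelta, ha, hb] <;> try ring
    simp only [h1]
    simp [hωii]
  have hupow : ∀ (i : Fin N) (c : ℤ), B (c • qtDelta N i) = ((U i ^ c : Rˣ) : R) := by
    intro i c
    induction c using Int.induction_on with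
    | zero => simp [hB0]
    | succ k ih =>
      have h := hBmul ((k : ℤ) • qtDelta N i) ((1 : ℤ) • qtDelta N i)
      rw [hzd i k 1, ← add_smul, one_smul, ← hUval i, ih] at h
      simp only [zpow_zero, Units.val_one, one_mul] at h
      rw [← h, ← Units.val_mul, ← zpow_add_one]
    | pred k ih =>
      have h := hBmul ((-k : ℤ) • qtDelta N i) ((-1 : ℤ) • qtDelta N i)
      have hm1 : ((-1 : ℤ)) • qtDelta N i = -qtDelta N i := by funext j; simp
      rw [hzd i (-k) (-1), ← add_smul, hm1, ← hUinv i, ih] at h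
      simp only [zpow_zero, Units.val_one, one_mul] at h
      have he2 : (-(k:ℤ) - 1) = -(k:ℤ) + -1 := by ring
      rw [he2, ← h, ← Units.val_mul]
      congr 1
      rw [zpow_add, zpow_neg_one]
  refine ⟨U, fun i => hUval i, fun l => ?_⟩
  have key : ∀ k : ℕ, k ≤ N →
      B (fun j => if (j : ℕ) < k then l j else 0)
        = ((v ^ (-(∑ a : Fin N, ∑ b : Fin N, if a < b then
              (if (a:ℕ) < k then l a else 0) * (if (b:ℕ) < k then l b else 0) * ω a b else 0))
            : Rˣ) : R)
          * (((((List.finRange N).take k).map (fun i => U i ^ l i)).prod : Rˣ) : R) := by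
    intro k
    induction k with
    | zero =>
      intro _
      have h0 : (fun j : Fin N => if (j:ℕ) < 0 then l j else 0) = 0 := by funext j; simp
      rw [h0, hB0]
      simp
    | succ k ih =>
      intro hk1
      have hk : k < N := hk1
      have ihk := ih (le_of_lt hk)
      have hik : ((⟨k, hk⟩ : Fin N) : ℕ) = k := rfl
      set i : Fin N := ⟨k, hk⟩ with hidef
      have harg : (fun j : Fin N => if (j:ℕ) < k then l j else 0) + (l i) • qtDelta N i
          = (fun j : Fin N => if (j:ℕ) < k + 1 then l j else 0) := by
        funext j
        simp only [Pi.add_apply, Pi.smul_apply, smul_eq_mul, qtDelta]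
        by_cases hj : j = i
        · subst hj
          simp [hik]
        · have hjk : (j:ℕ) ≠ k := fun h => hj (Fin.ext (by rw [h, hik]))
          simp only [if_neg hj, mul_zero, add_zero]
          by_cases h2 : (j:ℕ) < k
          · simp [h2, Nat.lt_succ_of_lt h2]
          · simp [h2, show ¬ (j:ℕ) < k+1 by omega]
      have hS : (∑ a : Fin N, ∑ b : Fin N,
            (fun j : Fin N => if (j:ℕ) < k then l j else 0) a * ((l i) • qtDelta N i) b * ω a b)
          = ∑ a : Fin N, (if (a:ℕ) < k then l a * l i * ω a i else 0) := by
        refine Finset.sum_congr rfl fun a _ => ?_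
        have hpt : ∀ b : Fin N,
            (fun j : Fin N => if (j:ℕ) < k then l j else 0) a * ((l i) • qtDelta N i) b * ω a b
            = if b = i then (if (a:ℕ) < k then l a * l i * ω a i else 0) else 0 := by
          intro b
          by_cases hb : b = i
          · subst hb
            simp only [Pi.smul_apply, smul_eq_mul, qtDelta, eq_self_iff_true, if_true, mul_one]
            by_cases ha : (a:ℕ) < k
            · simp only [if_pos ha]; try ring
            · simp [ha]
          · simp [Pi.smul_apply, qtDelta, hb]
        rw [Finset.sum_congr rfl fun b _ => hpt b]
        simp
      have hQ : (∑ a : Fin N, ∑ b : Fin N, if a < b then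
            (if (a:ℕ) < k+1 then l a else 0) * (if (b:ℕ) < k+1 then l b else 0) * ω a b else 0)
          = (∑ a : Fin N, ∑ b : Fin N, if a < b then
            (if (a:ℕ) < k then l a else 0) * (if (b:ℕ) < k then l b else 0) * ω a b else 0)
          + ∑ a : Fin N, (if (a:ℕ) < k then l a * l i * ω a i else 0) := by
        rw [← Finset.sum_add_distrib]
        refine Finset.sum_congr rfl fun a _ => ?_
        have hpt : ∀ b : Fin N,
            (if a < b then (if (a:ℕ)<k+1 then l a else 0) * (if (b:ℕ)<k+1 then l b else 0) * ω a b else 0)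
            = (if a < b then (if (a:ℕ)<k then l a else 0) * (if (b:ℕ)<k then l b else 0) * ω a b else 0)
              + (if b = i then (if (a:ℕ) < k then l a * l i * ω a b else 0) else 0) := by
          intro b
          by_cases hb : b = i
          · subst hb
            simp only [Fin.lt_def, hik, eq_self_iff_true, if_true]
            split_ifs <;> first | ring1 | (exfalso; omega)
          · have hbk : (b:ℕ) ≠ k := fun h => hb (Fin.ext (by rw [h, hik]))
            simp only [Fin.lt_def, if_neg hb, add_zero]
            split_ifs <;> first | ring1 | (exfalso; omega)
        rw [Finset.sum_congr rfl fun b _ => hpt b, Finset.sum_add_distrib]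
        congr 1
        simp
      have h := hBmul (fun j : Fin N => if (j:ℕ) < k then l j else 0) ((l i) • qtDelta N i)
      rw [harg, hupow i (l i), ihk, hS] at h
      set Qk : ℤ := (∑ a : Fin N, ∑ b : Fin N, if a < b then
            (if (a:ℕ) < k then l a else 0) * (if (b:ℕ) < k then l b else 0) * ω a b else 0) with hQk
      set Sk : ℤ := ∑ a : Fin N, (if (a:ℕ) < k then l a * l i * ω a i else 0) with hSk
      set Pk : Rˣ := (((List.finRange N).take k).map (fun i => U i ^ l i)).prod with hPk
      have hcan : ∀ r : R, ((v ^ (-Sk) : Rˣ) : R) * (((v ^ Sk : Rˣ) : R) * r) = r := by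
        intro r
        rw [← mul_assoc, ← Units.val_mul, ← zpow_add, neg_add_cancel, zpow_zero,
          Units.val_one, one_mul]
      have h2 : B (fun j : Fin N => if (j:ℕ) < k + 1 then l j else 0)
          = ((v ^ (-Sk) : Rˣ) : R)
            * (((v ^ (-Qk) : Rˣ) : R) * (Pk : R) * ((U i ^ l i : Rˣ) : R)) := by
        rw [h]
        exact (hcan _).symm
      have hP : ((List.finRange N).take (k+1)).map (fun i => U i ^ l i)
          = (((List.finRange N).take k).map (fun i => U i ^ l i)) ++ [U i ^ l i] := by
        rw [List.take_succ]
        congr 1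
        simp [List.getElem?_eq_getElem, hk, hidef]
      have hvv : (v ^ (-(Qk + Sk)) : Rˣ) = v ^ (-Sk) * v ^ (-Qk) := by
        rw [← zpow_add]; congr 1; ring
      rw [hQ, h2, hP, List.prod_append, List.prod_singleton, Units.val_mul, hvv, Units.val_mul]
      simp [mul_assoc, hPk, List.map_take]
  have hfin := key N le_rfl
  have hTl : (fun j : Fin N => if (j:ℕ) < N then l j else 0) = l := by
    funext j; simp [j.isLt]
  rw [hTl, List.take_of_length_le (by simp)] at hfin
  simpa [Fin.is_lt] using hfin
end

section
/- Permutation invariance of the normalized ordered monomial (the assertion following eq. (20) of the paper that both sides of the formula for B_λ are invariant under permutations of indices): under the stated hypotheses, for every permutation σ of Fin N and every λ : Fin N → ℤ, M λ = v^{-∑_{i<j} λ(σ i) · λ(σ j) · ω (σ i) (σ j)} * ∏_{i=0}^{N-1} (A (σ i))^{λ (σ i)}, the product taken in increasing order of the index i. -/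
/-- Sum of `f a b` over ordered pairs (a before b) in a list. -/
def Epair {ι : Type*} (f : ι → ι → ℤ) : List ι → ℤ
  | [] => 0
  | a :: t => (t.map (f a)).sum + Epair f t

lemma Epair_map {ι κ : Type*} (f : κ → κ → ℤ) (σ : ι → κ) :
    ∀ L : List ι, Epair f (L.map σ) = Epair (fun i j => f (σ i) (σ j)) L
  | [] => rfl
  | a :: t => by
      simp only [List.map_cons, Epair, List.map_map, Epair_map f σ t]
      rfl

lemma Epair_finRange : ∀ (N : ℕ) (h : Fin N → Fin N → ℤ),
    Epair h (List.finRange N) = ∑ i : Fin N, ∑ j : Fin N, if i < j then h i j else 0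
  | 0, h => by simp [Epair, List.finRange]
  | (n+1), h => by
      rw [List.finRange_succ]
      show (((List.finRange n).map Fin.succ).map (h 0)).sum +
          Epair h ((List.finRange n).map Fin.succ) = _
      rw [Epair_map, Epair_finRange n, List.map_map]
      simp [Fin.sum_univ_succ, Fin.succ_lt_succ_iff, Fin.sum_univ_def, Function.comp_def]

/-- commutation of zpowers when the `q`-factor is central -/
lemma aux_comm {G : Type*} [Group G] (z a b : G) (hz : ∀ g, z * g = g * z)
    (h : a * b = z * (b * a)) (m n : ℤ) :
    a ^ m * b ^ n = z ^ (m * n) * (b ^ n * a ^ m) := by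
  have hsa : SemiconjBy a b (z * b) := by
    unfold SemiconjBy; rw [h, mul_assoc]
  have h1 : a * b ^ n = z ^ n * b ^ n * a := by
    have := hsa.zpow_right n
    rwa [(show Commute z b from hz b).mul_zpow] at this
  have hs2 : SemiconjBy (b ^ n) a ((z ^ n)⁻¹ * a) := by
    unfold SemiconjBy
    rw [mul_assoc, h1, ← mul_assoc, ← mul_assoc, inv_mul_cancel, one_mul]
  have h3 := hs2.zpow_right m
  have hc : Commute ((z ^ n)⁻¹) a := (((show Commute z a from hz a)).zpow_left n).inv_left
  rw [hc.mul_zpow] at h3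
  -- h3 : b ^ n * a ^ m = ((z ^ n)⁻¹) ^ m * a ^ m * (b ^ n)
  rw [h3]
  rw [← zpow_neg, ← zpow_mul, ← mul_assoc, ← mul_assoc, ← zpow_add]
  have : m * n + -n * m = 0 := by ring
  rw [this, zpow_zero, one_mul]

/-- invariance of the normalized product under list permutation -/
lemma perm_G {G : Type*} [Group G] {ι : Type*} (v : G) (hv : ∀ g, v * g = g * v)
    (g : ι → G) (f : ι → ι → ℤ) (hf : ∀ i j, f i j = - f j i)
    (hcomm : ∀ i j, g i * g j = v ^ (2 * f i j) * (g j * g i)) :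
    ∀ {L1 L2 : List ι}, L1.Perm L2 →
      v ^ (-(Epair f L1)) * (L1.map g).prod = v ^ (-(Epair f L2)) * (L2.map g).prod := by
  have hvk : ∀ (k : ℤ) (u : G), v ^ k * u = u * v ^ k :=
    fun k u => ((show Commute v u from hv u).zpow_left k)
  intro L1 L2 h
  induction h with
  | nil => rfl
  | cons x h ih =>
      rename_i t1 t2
      show v ^ (-((t1.map (f x)).sum + Epair f t1)) * ((g x) * (t1.map g).prod) = _
      have hS : (t1.map (f x)).sum = (t2.map (f x)).sum := (h.map (f x)).sum_eq
      calc v ^ (-((t1.map (f x)).sum + Epair f t1)) * ((g x) * (t1.map g).prod)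
          = v ^ (-(t1.map (f x)).sum) * (v ^ (-(Epair f t1)) * (g x) * (t1.map g).prod) := by
            rw [neg_add, zpow_add]; group
        _ = v ^ (-(t1.map (f x)).sum) * ((g x) * (v ^ (-(Epair f t1)) * (t1.map g).prod)) := by
            rw [hvk (-(Epair f t1)) (g x)]; group
        _ = v ^ (-(t2.map (f x)).sum) * ((g x) * (v ^ (-(Epair f t2)) * (t2.map g).prod)) := by
            rw [hS, ih]
        _ = _ := by
            show _ = v ^ (-((t2.map (f x)).sum + Epair f t2)) * ((g x) * (t2.map g).prod)
            rw [neg_add, zpow_add, mul_assoc]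
            congr 1
            rw [← mul_assoc, ← hvk, mul_assoc]
  | swap x y t =>
      show v ^ (-((f y x + (t.map (f y)).sum) + ((t.map (f x)).sum + Epair f t))) *
          (g y * (g x * (t.map g).prod)) =
        v ^ (-((f x y + (t.map (f x)).sum) + ((t.map (f y)).sum + Epair f t))) *
          (g x * (g y * (t.map g).prod))
      rw [← mul_assoc (g y), hcomm y x, ← mul_assoc, ← mul_assoc, ← zpow_add]
      have : -(f y x + (t.map (f y)).sum + ((t.map (f x)).sum + Epair f t)) + 2 * f y x =
          -(f x y + (t.map (f x)).sum + ((t.map (f y)).sum + Epair f t)) := by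
        rw [hf x y]; ring
      rw [this, mul_assoc, mul_assoc]
  | trans _ _ ih1 ih2 => rw [ih1, ih2]

/-- Permutation invariance of the normalized ordered monomial
(the assertion following eq. (20) of the paper): for every permutation `σ` of `Fin N`
and every `λ : Fin N → ℤ`,
`M λ = v ^ (-∑_{i<j} λ(σ i) * λ(σ j) * ω (σ i) (σ j)) * ∏_{i} (A (σ i)) ^ (λ (σ i))`,
the product taken in increasing order of the index `i`. -/
theorem stmt_2 {R : Type*} [Ring R] (v : Rˣ)
    (hv : ∀ r : R, (v : R) * r = r * (v : R))
    (N : ℕ) (ω : Fin N → Fin N → ℤ)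
    (hω : ∀ i j, ω i j = -ω j i)
    (A : Fin N → Rˣ)
    (hA : ∀ i j, A i * A j = v ^ (2 * ω i j) * (A j * A i))
    (M : (Fin N → ℤ) → Rˣ)
    (hM : ∀ l : Fin N → ℤ,
      M l = v ^ (-(∑ i : Fin N, ∑ j : Fin N, if i < j then l i * l j * ω i j else 0)) *
        ((List.finRange N).map (fun i => A i ^ (l i))).prod) :
    ∀ (σ : Equiv.Perm (Fin N)) (l : Fin N → ℤ),
      M l = v ^ (-(∑ i : Fin N, ∑ j : Fin N,
            if i < j then l (σ i) * l (σ j) * ω (σ i) (σ j) else 0)) *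
          ((List.finRange N).map (fun i => A (σ i) ^ (l (σ i)))).prod := by
  intro σ l
  have hvu : ∀ u : Rˣ, (v : Rˣ) * u = u * v := fun u => Units.ext (hv u)
  set f : Fin N → Fin N → ℤ := fun i j => l i * l j * ω i j with hfdef
  have hf : ∀ i j, f i j = - f j i := by
    intro i j; simp only [hfdef]; rw [hω i j]; ring
  set g : Fin N → Rˣ := fun i => A i ^ (l i) with hgdef
  have hcomm : ∀ i j, g i * g j = v ^ (2 * f i j) * (g j * g i) := by
    intro i j
    have := aux_comm (v ^ (2 * ω i j)) (A i) (A j)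
      (fun u => by
        have : Commute (v : Rˣ) u := hvu u
        exact (this.zpow_left (2 * ω i j)))
      (hA i j) (l i) (l j)
    rw [← zpow_mul] at this
    have he : 2 * ω i j * (l i * l j) = 2 * f i j := by simp only [hfdef]; ring
    rw [he] at this
    exact this
  -- list permutation
  have hperm : ((List.finRange N).map σ).Perm (List.finRange N) := by
    rw [List.perm_ext_iff_of_nodup ((List.nodup_finRange N).map σ.injective)
      (List.nodup_finRange N)]
    intro a
    simp only [List.mem_map, List.mem_finRange, iff_true]
    exact ⟨σ.symm a, trivial, σ.apply_symm_apply a⟩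
  have e1 : (∑ i : Fin N, ∑ j : Fin N, if i < j then l i * l j * ω i j else 0) =
      Epair f (List.finRange N) := (Epair_finRange N f).symm
  have e2 : (∑ i : Fin N, ∑ j : Fin N,
      if i < j then l (σ i) * l (σ j) * ω (σ i) (σ j) else 0) =
      Epair f ((List.finRange N).map σ) := by
    rw [Epair_map]; exact (Epair_finRange N _).symm
  have e3 : (List.finRange N).map (fun i => A (σ i) ^ (l (σ i))) =
      (((List.finRange N).map σ).map g) := by
    rw [List.map_map]; rfl
  rw [hM l, e1, e2, e3]
  exact (perm_G (v : Rˣ) hvu g f hf hcomm hperm).symm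
end

section
/- Sign-independence of compatibility-matrix mutation (the assertion of the paper that formula (22) does not depend on the sign σ): under the stated compatibility hypotheses, E_{k,1}ᵀ · Π · E_{k,1} = E_{k,-1}ᵀ · Π · E_{k,-1}. -/
open Matrix

/-- The matrix `E_{k,σ}` of the paper: `(E_{k,σ})_{ij} = δ_{ij}` if `j ≠ k`,
`(E_{k,σ})_{kk} = -1`, and `(E_{k,σ})_{ik} = [-σ·ε_{ki}]_+` for `i ≠ k`. -/
def Emat {I : Type*} [DecidableEq I] {Iuf : Set I}
    (k : I) (hk : k ∈ Iuf) (ε : Matrix ↥Iuf I ℤ) (σ : ℤ) : Matrix I I ℤ :=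
  Matrix.of fun i j =>
    if j = k then (if i = k then -1 else max (-(σ * ε ⟨k, hk⟩ i)) 0)
    else if i = j then 1 else 0

section aux

variable {I : Type*} [Fintype I]

lemma aux_mul_vecMulVec (A : Matrix I I ℤ) (u e : I → ℤ) :
    A * vecMulVec u e = vecMulVec (A.mulVec u) e := by
  ext i j
  simp only [Matrix.mul_apply, vecMulVec_apply, Matrix.mulVec, dotProduct]
  rw [Finset.sum_mul]
  congr 1; ext x; ring

lemma aux_vecMulVec_mul (A : Matrix I I ℤ) (u e : I → ℤ) :
    vecMulVec e u * A = vecMulVec e (Matrix.vecMul u A) := by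
  ext i j
  simp only [Matrix.mul_apply, vecMulVec_apply, Matrix.vecMul, dotProduct]
  rw [Finset.mul_sum]
  congr 1; ext x; ring

lemma aux_vecMulVec_mul_vecMulVec (a b c e : I → ℤ) :
    vecMulVec a b * vecMulVec c e = (∑ x, b x * c x) • vecMulVec a e := by
  ext i j
  simp only [Matrix.mul_apply, vecMulVec_apply, Matrix.smul_apply, smul_eq_mul]
  rw [Finset.sum_mul]
  congr 1; ext x; ring

lemma aux_quad (P : Matrix I I ℤ) (hP : Pᵀ = -P) (u : I → ℤ) :
    ∑ x, Matrix.vecMul u P x * u x = 0 := by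
  have h : ∀ i j, P i j = -P j i := by
    intro i j
    have := congrFun (congrFun hP j) i
    simpa [Matrix.transpose_apply] using this
  have hgoal : (∑ x, Matrix.vecMul u P x * u x) = ∑ x, ∑ y, u y * P y x * u x := by
    apply Finset.sum_congr rfl; intro x _
    simp only [Matrix.vecMul, dotProduct]
    rw [Finset.sum_mul]
  have key : (∑ x, ∑ y, u y * P y x * u x) = -(∑ x, ∑ y, u y * P y x * u x) := by
    conv_lhs => rw [Finset.sum_comm]
    rw [← Finset.sum_neg_distrib]
    apply Finset.sum_congr rfl; intro a _
    rw [← Finset.sum_neg_distrib]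
    apply Finset.sum_congr rfl; intro b _
    rw [h b a]; ring
  rw [hgoal]
  linarith [key]

end aux

/-- Sign-independence of compatibility-matrix mutation
(formula (22) of the paper does not depend on the sign `σ`): if the principal
`I_uf × I_uf` submatrix of `ε` is skew-symmetric, `Π` is skew-symmetric, and the
compatibility relation `∑_b ε_{ib} Π_{bj} = δ_{ij} d_i` holds with positive integers
`d_i`, then `E_{k,1}ᵀ · Π · E_{k,1} = E_{k,-1}ᵀ · Π · E_{k,-1}`. -/
theorem stmt_5 {I : Type*} [Fintype I] [DecidableEq I]
    {Iuf : Set I} [DecidablePred (· ∈ Iuf)]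
    (k : I) (hk : k ∈ Iuf)
    (ε : Matrix ↥Iuf I ℤ)
    (hεskew : ∀ i j : ↥Iuf, ε i (j : I) = -(ε j (i : I)))
    (Pmat : Matrix I I ℤ)
    (hPskew : Pmatᵀ = -Pmat)
    (d : ↥Iuf → ℤ) (hd : ∀ i, 0 < d i)
    (hcompat : ∀ (i : ↥Iuf) (j : I),
      ∑ b : I, ε i b * Pmat b j = if (i : I) = j then d i else 0) :
    (Emat k hk ε 1)ᵀ * Pmat * Emat k hk ε 1 =
      (Emat k hk ε (-1))ᵀ * Pmat * Emat k hk ε (-1) := by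
  classical
  set e : I → ℤ := fun j => if j = k then 1 else 0 with he
  set u : ℤ → I → ℤ :=
    fun σ i => (if i = k then (-2 : ℤ) else max (-(σ * ε ⟨k, hk⟩ i)) 0) with hu
  have hεkk : ε ⟨k, hk⟩ k = 0 := by
    have h : ε ⟨k, hk⟩ k = -(ε ⟨k, hk⟩ k) := hεskew ⟨k, hk⟩ ⟨k, hk⟩
    omega
  have hE : ∀ σ : ℤ, Emat k hk ε σ = 1 + vecMulVec (u σ) e := by
    intro σ
    ext i j
    simp only [hu, he, Emat, Matrix.of_apply, Matrix.add_apply, Matrix.one_apply,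
      vecMulVec_apply]
    by_cases hj : j = k
    · by_cases hik : i = k
      · simp [hj, hik]
      · simp [hj, hik]
    · simp [hj]
  have hw : ∀ i, u 1 i - u (-1) i = -(ε ⟨k, hk⟩ i) := by
    intro i
    by_cases hi : i = k
    · subst hi; simp [hu, hεkk]
    · simp only [hu, if_neg hi, one_mul, neg_mul, neg_neg, max_def]
      split_ifs <;> omega
  -- Π w = d_k • e
  have hPw : Pmat.mulVec (fun i => u 1 i - u (-1) i) = fun i => d ⟨k, hk⟩ * e i := by
    funext i
    have hP : ∀ a b, Pmat a b = -Pmat b a := by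
      intro a b
      have := congrFun (congrFun hPskew b) a
      simpa [Matrix.transpose_apply] using this
    have hc := hcompat ⟨k, hk⟩ i
    simp only [Matrix.mulVec, dotProduct]
    calc ∑ b, Pmat i b * (u 1 b - u (-1) b)
        = ∑ b, ε ⟨k, hk⟩ b * Pmat b i := by
          congr 1; ext b; rw [hw b, hP i b]; ring
      _ = d ⟨k, hk⟩ * e i := by
          rw [hc, he]
          by_cases hki : (k : I) = i
          · subst hki; simp
          · simp [hki, Ne.symm hki]
  -- w Π = -(d_k • e)
  have hwP : Matrix.vecMul (fun i => u 1 i - u (-1) i) Pmat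
      = fun j => -(d ⟨k, hk⟩ * e j) := by
    funext j
    have hc := hcompat ⟨k, hk⟩ j
    simp only [Matrix.vecMul, dotProduct]
    calc ∑ b, (u 1 b - u (-1) b) * Pmat b j
        = -∑ b, ε ⟨k, hk⟩ b * Pmat b j := by
          rw [← Finset.sum_neg_distrib]
          congr 1; ext b; rw [hw b]; ring
      _ = -(d ⟨k, hk⟩ * e j) := by
          rw [hc, he]
          by_cases hkj : (k : I) = j
          · subst hkj; simp
          · simp [hkj, Ne.symm hkj]
  rw [hE 1, hE (-1)]
  have expand : ∀ σ : ℤ,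
      (1 + vecMulVec (u σ) e)ᵀ * Pmat * (1 + vecMulVec (u σ) e)
      = Pmat + vecMulVec (Pmat.mulVec (u σ)) e + vecMulVec e (Matrix.vecMul (u σ) Pmat)
        + (∑ x, Matrix.vecMul (u σ) Pmat x * u σ x) • vecMulVec e e := by
    intro σ
    have ht : (vecMulVec (u σ) e)ᵀ = vecMulVec e (u σ) := by
      ext i j; simp [vecMulVec_apply, mul_comm]
    rw [Matrix.transpose_add, Matrix.transpose_one, ht]
    have hexp : (1 + vecMulVec e (u σ)) * Pmat * (1 + vecMulVec (u σ) e)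
        = Pmat + Pmat * vecMulVec (u σ) e + vecMulVec e (u σ) * Pmat
          + vecMulVec e (u σ) * Pmat * vecMulVec (u σ) e := by
      noncomm_ring
    rw [hexp, aux_vecMulVec_mul, aux_mul_vecMulVec, aux_vecMulVec_mul_vecMulVec]
  rw [expand 1, expand (-1), aux_quad Pmat hPskew (u 1), aux_quad Pmat hPskew (u (-1))]
  simp only [zero_smul, add_zero]
  ext i j
  simp only [Matrix.add_apply, vecMulVec_apply]
  have hd1 : (Pmat.mulVec (u 1)) i - (Pmat.mulVec (u (-1))) i = d ⟨k, hk⟩ * e i := by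
    have h := congrFun hPw i
    calc (Pmat.mulVec (u 1)) i - (Pmat.mulVec (u (-1))) i
        = (Pmat.mulVec (fun b => u 1 b - u (-1) b)) i := by
          simp only [Matrix.mulVec, dotProduct]
          rw [← Finset.sum_sub_distrib]
          congr 1; ext b; ring
      _ = d ⟨k, hk⟩ * e i := h
  have hd2 : (Matrix.vecMul (u 1) Pmat) j - (Matrix.vecMul (u (-1)) Pmat) j
      = -(d ⟨k, hk⟩ * e j) := by
    have h := congrFun hwP j
    calc (Matrix.vecMul (u 1) Pmat) j - (Matrix.vecMul (u (-1)) Pmat) j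
        = (Matrix.vecMul (fun b => u 1 b - u (-1) b) Pmat) j := by
          simp only [Matrix.vecMul, dotProduct]
          rw [← Finset.sum_sub_distrib]
          congr 1; ext b; ring
      _ = -(d ⟨k, hk⟩ * e j) := h
  linear_combination e j * hd1 + e i * hd2
end

section
/- Well-definedness of quantum seed mutation (preservation of compatible pairs): under the stated compatibility hypotheses, set ε' := F_{k,σ}ᵀ · ε · E_{k,σ}ᵀ and Π' := E_{k,σ}ᵀ · Π · E_{k,σ} for either sign σ ∈ {1, -1}. Then Π' is skew-symmetric, the principal I_uf × I_uf submatrix of ε' is skew-symmetric, and the pair (ε', Π') again satisfies the compatibility relation with the same positive integers: ∑_{b∈I} ε'_{ib} · Π'_{bj} = δ_{ij} · d_i for all i ∈ I_uf and j ∈ I. -/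
open Matrix

/-- The matrix `F_{k,σ}` of the paper: `(F_{k,σ})_{ij} = δ_{ij}` if `i ≠ k`,
`(F_{k,σ})_{kk} = -1`, and `(F_{k,σ})_{kj} = [σ·ε_{jk}]_+` for `j ≠ k`. -/
def Fmat {I : Type*} [DecidableEq I] {Iuf : Set I}
    (k : I) (hk : k ∈ Iuf) (ε : Matrix ↥Iuf I ℤ) (σ : ℤ) : Matrix ↥Iuf ↥Iuf ℤ :=
  Matrix.of fun i j =>
    if i = ⟨k, hk⟩ then (if j = ⟨k, hk⟩ then -1 else max (σ * ε j k) 0)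
    else if i = j then 1 else 0

private lemma sum_one' {α : Type*} [Fintype α] [DecidableEq α] (a₀ : α)
    (x : ℤ) (f : α → ℤ) (hf : ∀ a, f a = if a = a₀ then x else 0) :
    ∑ a, f a = x := by
  simp only [hf, Finset.sum_ite_eq', Finset.mem_univ, if_true]

private lemma sum_two' {α : Type*} [Fintype α] [DecidableEq α] {a₀ a₁ : α} (h : a₀ ≠ a₁)
    (x y : ℤ) (f : α → ℤ)
    (hf : ∀ a, f a = if a = a₀ then x else if a = a₁ then y else 0) :
    ∑ a, f a = x + y := by
  have h2 : ∀ a, f a = (if a = a₀ then x else 0) + (if a = a₁ then y else 0) := by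
    intro a
    rw [hf]
    rcases eq_or_ne a a₀ with rfl | h0
    · simp [h]
    · simp [h0]
  simp only [h2, Finset.sum_add_distrib, Finset.sum_ite_eq', Finset.mem_univ, if_true]

section
set_option linter.unusedSectionVars false
variable {I : Type*} [Fintype I] [DecidableEq I] {Iuf : Set I} [DecidablePred (· ∈ Iuf)]
  (k : I) (hk : k ∈ Iuf) (ε : Matrix ↥Iuf I ℤ) (σ : ℤ)

private lemma Emat_k_apply (j : I) : Emat k hk ε σ k j = if j = k then -1 else 0 := by
  by_cases h : j = k
  · simp [Emat, h]
  · simp [Emat, h, Ne.symm h]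

private lemma Emat_apply_k {i : I} (h : i ≠ k) :
    Emat k hk ε σ i k = max (-(σ * ε ⟨k, hk⟩ i)) 0 := by
  simp [Emat, h]

private lemma Emat_apply_ne (i : I) {j : I} (h : j ≠ k) :
    Emat k hk ε σ i j = if i = j then 1 else 0 := by
  simp [Emat, h]

private lemma EmatSq : Emat k hk ε σ * Emat k hk ε σ = 1 := by
  ext i j
  rw [mul_apply]
  by_cases hik : i = k
  · rw [sum_one' k (-(Emat k hk ε σ k j)) _ ?_]
    · rw [Emat_k_apply]
      by_cases hj : j = k
      · simp [hj, hik, one_apply]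
      · simp [hj, hik, one_apply, Ne.symm hj]
    · intro a
      by_cases h : a = k
      · rw [hik, h, Emat_k_apply, Emat_k_apply, if_pos rfl]
        split_ifs <;> simp_all
      · rw [hik, Emat_k_apply, if_neg h, if_neg h, zero_mul]
  · rw [sum_two' (Ne.symm hik) (Emat k hk ε σ i k * Emat k hk ε σ k j)
      (Emat k hk ε σ i j) _ ?_]
    · rw [Emat_k_apply]
      by_cases hj : j = k
      · rw [hj]
        simp [one_apply, hik]
      · simp [hj, Emat_apply_ne k hk ε σ i hj, one_apply]
    · intro a
      by_cases h1 : a = k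
      · simp [h1]
      · rw [Emat_apply_ne k hk ε σ i h1]
        by_cases h2 : a = i
        · simp [h2, hik]
        · simp [h1, h2, Ne.symm h2]

private lemma mul_Et (M : Matrix ↥Iuf I ℤ) (i : ↥Iuf) (j : I) :
    (M * (Emat k hk ε σ)ᵀ) i j =
      if j = k then -(M i k) else M i j + M i k * max (-(σ * ε ⟨k, hk⟩ j)) 0 := by
  rw [mul_apply]
  by_cases hjk : j = k
  · rw [sum_one' k (-(M i k)) _ ?_, if_pos hjk]
    intro a
    rw [transpose_apply, hjk, Emat_k_apply]
    by_cases h : a = k <;> simp [h]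
  · rw [sum_two' (fun h => hjk h.symm : k ≠ j) (M i k * Emat k hk ε σ j k) (M i j) _ ?_,
      if_neg hjk, Emat_apply_k k hk ε σ hjk, add_comm]
    intro a
    rw [transpose_apply]
    by_cases h1 : a = k
    · simp [h1]
    · rw [Emat_apply_ne k hk ε σ j h1]
      by_cases h2 : a = j
      · simp [h2, hjk]
      · simp [h1, h2, Ne.symm h2]

private lemma Ft_mul (M : Matrix ↥Iuf I ℤ) (i : ↥Iuf) (b : I) :
    ((Fmat k hk ε σ)ᵀ * M) i b =
      if i = ⟨k, hk⟩ then -(M ⟨k, hk⟩ b)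
      else M i b + max (σ * ε i k) 0 * M ⟨k, hk⟩ b := by
  rw [mul_apply]
  by_cases hik : i = (⟨k, hk⟩ : ↥Iuf)
  · rw [sum_one' (⟨k, hk⟩ : ↥Iuf) (-(M ⟨k, hk⟩ b)) _ ?_, if_pos hik]
    intro a
    rw [transpose_apply]
    by_cases h : a = (⟨k, hk⟩ : ↥Iuf) <;> simp [Fmat, h, hik]
  · rw [sum_two' (Ne.symm hik) (max (σ * ε i k) 0 * M ⟨k, hk⟩ b) (M i b) _ ?_,
      if_neg hik, add_comm]
    intro a
    rw [transpose_apply]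
    by_cases h1 : a = (⟨k, hk⟩ : ↥Iuf)
    · simp [Fmat, h1, hik]
    · by_cases h2 : a = i
      · simp [Fmat, h2, hik]
      · simp [Fmat, h1, h2, Ne.symm h2]
end

private lemma key_lemma {I : Type*} [Fintype I] [DecidableEq I] {Iuf : Set I}
    (ε : Matrix ↥Iuf I ℤ)
    (hεskew : ∀ i j : ↥Iuf, ε i (j : I) = -(ε j (i : I)))
    (Pmat : Matrix I I ℤ) (hPskew : Pmatᵀ = -Pmat)
    (d : ↥Iuf → ℤ)
    (hcompat : ∀ (i : ↥Iuf) (j : I),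
      ∑ b : I, ε i b * Pmat b j = if (i : I) = j then d i else 0)
    (i j : ↥Iuf) : d i * ε j (i : I) = d j * ε j (i : I) := by
  have hP : ∀ b c : I, Pmat b c = -(Pmat c b) := by
    intro b c
    have := congrFun (congrFun hPskew c) b
    simpa using this
  have h1 : ∑ c : I, (if (i:I) = c then d i else 0) * ε j c = d i * ε j (i:I) := by
    simp [ite_mul, Finset.sum_ite_eq]
  have h2 : ∑ c : I, (∑ b : I, ε i b * Pmat b c) * ε j c = -(d j * ε i (j:I)) := by
    have step : ∀ c, (∑ b : I, ε i b * Pmat b c) * ε j c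
        = ∑ b : I, ε i b * (Pmat b c * ε j c) := by
      intro c; rw [Finset.sum_mul]; exact Finset.sum_congr rfl fun b _ => by ring
    rw [Finset.sum_congr rfl fun c _ => step c, Finset.sum_comm]
    have inner : ∀ b, ∑ c : I, ε i b * (Pmat b c * ε j c)
        = ε i b * -(if (j:I) = b then d j else 0) := by
      intro b
      rw [← Finset.mul_sum]
      congr 1
      have : ∑ c : I, Pmat b c * ε j c = -(∑ c : I, ε j c * Pmat c b) := by
        rw [← Finset.sum_neg_distrib]
        exact Finset.sum_congr rfl fun c _ => by rw [hP b c]; ring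
      rw [this, hcompat j b]
    rw [Finset.sum_congr rfl fun b _ => inner b]
    simp [mul_ite, Finset.sum_ite_eq, mul_comm]
  have h12 : ∑ c : I, (∑ b : I, ε i b * Pmat b c) * ε j c
      = ∑ c : I, (if (i:I) = c then d i else 0) * ε j c :=
    Finset.sum_congr rfl fun c _ => by rw [hcompat i c]
  have h3 : d i * ε j (i:I) = -(d j * ε i (j:I)) := by rw [← h1, ← h12, h2]
  rw [hεskew i j, mul_neg, neg_neg] at h3
  exact h3

/-- Well-definedness of quantum seed mutation (preservation of compatible
pairs): with `ε' := F_{k,σ}ᵀ · ε · E_{k,σ}ᵀ` and `Π' := E_{k,σ}ᵀ · Π · E_{k,σ}` for either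
sign `σ ∈ {1,-1}`, the matrix `Π'` is skew-symmetric, the principal `I_uf × I_uf`
submatrix of `ε'` is skew-symmetric, and `(ε', Π')` again satisfies the compatibility
relation `∑_b ε'_{ib} Π'_{bj} = δ_{ij} d_i` with the same positive integers `d_i`. -/
theorem stmt_6 {I : Type*} [Fintype I] [DecidableEq I]
    {Iuf : Set I} [DecidablePred (· ∈ Iuf)]
    (k : I) (hk : k ∈ Iuf)
    (ε : Matrix ↥Iuf I ℤ)
    (hεskew : ∀ i j : ↥Iuf, ε i (j : I) = -(ε j (i : I)))
    (Pmat : Matrix I I ℤ)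
    (hPskew : Pmatᵀ = -Pmat)
    (d : ↥Iuf → ℤ) (hd : ∀ i, 0 < d i)
    (hcompat : ∀ (i : ↥Iuf) (j : I),
      ∑ b : I, ε i b * Pmat b j = if (i : I) = j then d i else 0)
    (σ : ℤ) (hσ : σ = 1 ∨ σ = -1)
    (ε' : Matrix ↥Iuf I ℤ) (hε' : ε' = (Fmat k hk ε σ)ᵀ * ε * (Emat k hk ε σ)ᵀ)
    (Pmat' : Matrix I I ℤ) (hPmat' : Pmat' = (Emat k hk ε σ)ᵀ * Pmat * Emat k hk ε σ) :
    Pmat'ᵀ = -Pmat' ∧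
      (∀ i j : ↥Iuf, ε' i (j : I) = -(ε' j (i : I))) ∧
      ∀ (i : ↥Iuf) (j : I),
        ∑ b : I, ε' i b * Pmat' b j = if (i : I) = j then d i else 0 := by
  have hKk : ((⟨k, hk⟩ : ↥Iuf) : I) = k := rfl
  have hεkk : ε ⟨k, hk⟩ k = 0 := by
    have := hεskew ⟨k, hk⟩ ⟨k, hk⟩
    rw [hKk] at this
    omega
  refine ⟨?_, ?_, ?_⟩
  · rw [hPmat', transpose_mul, transpose_mul, transpose_transpose, hPskew]
    simp [Matrix.neg_mul, Matrix.mul_neg, Matrix.mul_assoc]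
  · intro i j
    have e1 : ε ⟨k, hk⟩ (j : I) = -(ε j k) := hεskew ⟨k, hk⟩ j
    have e2 : ε ⟨k, hk⟩ (i : I) = -(ε i k) := hεskew ⟨k, hk⟩ i
    rw [hε']
    simp only [mul_Et, Ft_mul]
    by_cases hi : i = (⟨k, hk⟩ : ↥Iuf) <;> by_cases hj : j = (⟨k, hk⟩ : ↥Iuf)
    · simp [hi, hj, hKk, hεkk]
    · have hjc : (j : I) ≠ k := fun h => hj (Subtype.ext h)
      simp [hi, hj, hjc, hKk, hεkk, e1]
    · have hic : (i : I) ≠ k := fun h => hi (Subtype.ext h)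
      simp [hi, hj, hic, hKk, hεkk, e2]
    · have hic : (i : I) ≠ k := fun h => hi (Subtype.ext h)
      have hjc : (j : I) ≠ k := fun h => hj (Subtype.ext h)
      simp only [hic, hjc, hi, hj, if_neg, ite_false]
      rw [e1, e2, hεkk]
      simp only [mul_neg, neg_neg, mul_zero, add_zero]
      linear_combination hεskew i j
  · have hEtEt : (Emat k hk ε σ)ᵀ * (Emat k hk ε σ)ᵀ = 1 := by
      rw [← transpose_mul, EmatSq, transpose_one]
    have hεP : ε * Pmat
        = Matrix.of (fun (a : ↥Iuf) (b : I) => if (a : I) = b then d a else 0) := by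
      ext a b
      rw [mul_apply]
      exact hcompat a b
    have hmat : ε' * Pmat' = (Fmat k hk ε σ)ᵀ *
        (Matrix.of (fun (a : ↥Iuf) (b : I) => if (a : I) = b then d a else 0)
          * Emat k hk ε σ) := by
      rw [hε', hPmat']
      simp only [Matrix.mul_assoc]
      rw [← Matrix.mul_assoc ((Emat k hk ε σ)ᵀ) ((Emat k hk ε σ)ᵀ), hEtEt, one_mul,
        ← Matrix.mul_assoc ε Pmat, hεP]
    have hDE : ∀ (a : ↥Iuf) (c : I),
        (Matrix.of (fun (a : ↥Iuf) (b : I) => if (a : I) = b then d a else 0)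
          * Emat k hk ε σ) a c = d a * Emat k hk ε σ (a : I) c := by
      intro a c
      rw [mul_apply]
      rw [sum_one' (a : I) (d a * Emat k hk ε σ (a : I) c) _ ?_]
      intro b
      by_cases h : b = (a : I)
      · simp [h]
      · simp [h, Ne.symm h]
    intro i j
    have hsum : ∑ b : I, ε' i b * Pmat' b j = (ε' * Pmat') i j := (mul_apply).symm
    rw [hsum, hmat, Ft_mul, hDE, hDE]
    by_cases hi : i = (⟨k, hk⟩ : ↥Iuf)
    · rw [if_pos hi, hi, hKk]
      rw [Emat_k_apply]
      by_cases hjk : j = k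
      · simp [hjk, hi, hKk]
      · simp [hjk, hi, hKk, Ne.symm hjk]
    · rw [if_neg hi]
      have hic : (i : I) ≠ k := fun h => hi (Subtype.ext h)
      by_cases hjk : j = k
      · rw [hjk, Emat_apply_k k hk ε σ hic, hKk, Emat_k_apply, if_pos rfl, if_neg hic]
        have e2 : ε ⟨k, hk⟩ (i : I) = -(ε i k) := hεskew ⟨k, hk⟩ i
        rw [e2, mul_neg, neg_neg]
        have hkey := key_lemma ε hεskew Pmat hPskew d hcompat i ⟨k, hk⟩
        rw [e2] at hkey
        rcases le_or_gt (σ * ε i k) 0 with h | h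
        · rw [max_eq_right h]
          ring
        · have hmax : max (σ * ε i k) 0 = σ * ε i k := max_eq_left h.le
          have hne : ε i k ≠ 0 := by
            rintro h0
            rw [h0, mul_zero] at h
            exact lt_irrefl 0 h
          have hdd : d i = d ⟨k, hk⟩ :=
            mul_right_cancel₀ (neg_ne_zero.mpr hne) hkey
          rw [hmax, hdd]
          ring
      · rw [Emat_k_apply, if_neg hjk, Emat_apply_ne k hk ε σ _ hjk]
        by_cases hij : (i : I) = j <;> simp [hij]
end

section
/- Compatibility forces skew-symmetrizability of the exchange matrix (an intermediate claim underlying the well-definedness of quantum seed mutation): if ε is an integer matrix with rows indexed by I_uf and columns indexed by I, Π is a skew-symmetric integer I × I matrix, and (d_i)_{i∈I_uf} are positive integers such that ∑_{b∈I} ε_{ib} · Π_{bj} = δ_{ij} · d_i for all i ∈ I_uf and j ∈ I, then d_i · ε_{ji} = -d_j · ε_{ij} for all i, j ∈ I_uf. -/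
open Matrix

/-- Compatibility forces skew-symmetrizability of the exchange matrix:
if `ε` is an integer matrix with rows indexed by `I_uf` and columns by `I`, `Π` is a
skew-symmetric integer `I × I` matrix, and `(d_i)` are positive integers such that
`∑_b ε_{ib} Π_{bj} = δ_{ij} d_i` for all `i ∈ I_uf`, `j ∈ I`, then
`d_i · ε_{ji} = -d_j · ε_{ij}` for all `i, j ∈ I_uf`. -/
theorem stmt_8 {I : Type*} [Fintype I] [DecidableEq I]
    {Iuf : Set I} [DecidablePred (· ∈ Iuf)]
    (ε : Matrix ↥Iuf I ℤ)
    (Pmat : Matrix I I ℤ)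
    (hPskew : Pmatᵀ = -Pmat)
    (d : ↥Iuf → ℤ) (hd : ∀ i, 0 < d i)
    (hcompat : ∀ (i : ↥Iuf) (j : I),
      ∑ b : I, ε i b * Pmat b j = if (i : I) = j then d i else 0) :
    ∀ i j : ↥Iuf, d i * ε j (i : I) = -(d j * ε i (j : I)) := by
  intro i j
  have key : ∑ b : I, (∑ a : I, ε i a * Pmat a b) * ε j b
      = ∑ a : I, ε i a * ∑ b : I, Pmat a b * ε j b := by
    simp_rw [Finset.sum_mul, Finset.mul_sum, mul_assoc]
    exact Finset.sum_comm
  have h1 : ∑ b : I, (∑ a : I, ε i a * Pmat a b) * ε j b = d i * ε j (i : I) := by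
    simp_rw [hcompat]
    simp
  have h2 : ∑ a : I, ε i a * ∑ b : I, Pmat a b * ε j b = -(d j * ε i (j : I)) := by
    have hsk : ∀ a b : I, Pmat a b = -Pmat b a := by
      intro a b
      have := congrFun (congrFun hPskew b) a
      simpa [Matrix.transpose_apply] using this
    calc ∑ a : I, ε i a * ∑ b : I, Pmat a b * ε j b
        = ∑ a : I, ε i a * -(∑ b : I, ε j b * Pmat b a) := by
          congr 1; funext a
          congr 1
          rw [← Finset.sum_neg_distrib]
          congr 1; funext b
          rw [hsk a b]; ring
      _ = ∑ a : I, ε i a * -(if (j : I) = a then d j else 0) := by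
          simp_rw [hcompat]
      _ = -(d j * ε i (j : I)) := by simp [mul_comm]
  rw [← h1, key, h2]
end
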